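/- Let m ≥ 1 and 0 < b < 10. Then ∫₀¹ (-log u)/(b+u)^m du ≤ C (1 + b^{1-m}|log b| + δ_{m=1}(log b)²) for a constant C depending only on m, where δ_{m=1} = 1 if m = 1 and 0 otherwise. -/

import Mathlib

open MeasureTheory Real

lemma neg_log_le (u : ℝ) (hu : 0 < u) : -Real.log u ≤ 2 * u ^ (-(1/2) : ℝ) := by
  have h1 : Real.log (u ^ (-(1/2):ℝ)) = (-(1/2)) * Real.log u := Real.log_rpow hu _
  have h2 : Real.log (u ^ (-(1/2):ℝ)) ≤ u ^ (-(1/2):ℝ) - 1 :=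
    Real.log_le_sub_one_of_pos (Real.rpow_pos_of_pos hu _)
  linarith

lemma f_contOn (m b : ℝ) (hb : 0 < b) :
    ContinuousOn (fun u : ℝ => (-Real.log u) / (b + u) ^ m) (Set.Ioi 0) := by
  apply ContinuousOn.div
  · exact (Real.continuousOn_log.mono (fun x hx => ne_of_gt hx)).neg
  · exact ((continuous_const.add continuous_id).continuousOn).rpow_const
      (fun x hx => Or.inl (by simp only [Set.mem_Ioi] at hx; show b + x ≠ 0; positivity))
  · intro x hx
    simp only [Set.mem_Ioi] at hx
    exact (Real.rpow_pos_of_pos (by linarith) m).ne' 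

lemma f_integrable (m b : ℝ) (hm : 0 ≤ m) (hb : 0 < b) :
    IntegrableOn (fun u => (-Real.log u) / (b + u) ^ m) (Set.Ioc 0 1) := by
  have hg : IntegrableOn (fun u : ℝ => 2 * (b ^ m)⁻¹ * u ^ (-(1/2):ℝ)) (Set.Ioc 0 1) := by
    have := (intervalIntegral.intervalIntegrable_rpow'
      (a := 0) (b := 1) (by norm_num : (-1:ℝ) < -(1/2)))
    rw [intervalIntegrable_iff, Set.uIoc_of_le zero_le_one] at this
    exact this.const_mul _
  refine hg.integrable.mono' (((f_contOn m b hb).mono (fun x hx => hx.1)).aestronglyMeasurable measurableSet_Ioc) ?_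
  filter_upwards [ae_restrict_mem measurableSet_Ioc] with u hu
  obtain ⟨hu0, hu1⟩ := hu
  have hbu : (0:ℝ) < (b + u) ^ m := Real.rpow_pos_of_pos (by linarith) m
  have hlog : 0 ≤ -Real.log u := by
    simpa using Real.log_nonpos hu0.le hu1
  rw [Real.norm_eq_abs, abs_div, abs_of_nonneg hlog, abs_of_pos hbu]
  have h1 : b ^ m ≤ (b + u) ^ m := Real.rpow_le_rpow hb.le (by linarith) hm
  have h2 : -Real.log u ≤ 2 * u ^ (-(1/2):ℝ) := neg_log_le u hu0
  have hbm : (0:ℝ) < b ^ m := Real.rpow_pos_of_pos hb m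
  calc (-Real.log u) / (b + u) ^ m ≤ (2 * u ^ (-(1/2):ℝ)) / b ^ m :=
        div_le_div₀ (by positivity) h2 hbm h1
    _ = 2 * (b ^ m)⁻¹ * u ^ (-(1/2):ℝ) := by ring

lemma sqrt_int (c : ℝ) (hc : 0 ≤ c) :
    ∫ u in (0:ℝ)..c, u ^ (-(1/2):ℝ) = 2 * c ^ ((1:ℝ)/2) := by
  rw [integral_rpow (Or.inl (by norm_num))]
  rw [Real.zero_rpow (by norm_num)]
  norm_num
  ring

lemma partA (m b : ℝ) (hm : 0 ≤ m) (hb : 0 < b) (hb1 : b ≤ 1) :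
    ∫ u in (0:ℝ)..b, (-Real.log u) / (b + u) ^ m ≤ b ^ (1 - m) * (4 + |Real.log b|) := by
  have hbm : (0:ℝ) < b ^ m := Real.rpow_pos_of_pos hb m
  have hint_f : IntervalIntegrable (fun u => (-Real.log u) / (b + u) ^ m) volume 0 b := by
    rw [intervalIntegrable_iff, Set.uIoc_of_le hb.le]
    exact (f_integrable m b hm hb).mono_set (Set.Ioc_subset_Ioc_right hb1)
  have hint_r : IntervalIntegrable (fun u : ℝ => u ^ (-(1/2):ℝ)) volume 0 b :=
    intervalIntegral.intervalIntegrable_rpow' (by norm_num)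
  have hint_g : IntervalIntegrable
      (fun u : ℝ => (2 * b ^ ((1:ℝ)/2) * u ^ (-(1/2):ℝ) + |Real.log b|) / b ^ m) volume 0 b :=
    (((hint_r.const_mul _).add (intervalIntegrable_const)).div_const _)
  have hmono : ∀ u ∈ Set.Icc (0:ℝ) b, (-Real.log u) / (b + u) ^ m ≤
      (2 * b ^ ((1:ℝ)/2) * u ^ (-(1/2):ℝ) + |Real.log b|) / b ^ m := by
    intro u ⟨hu0, hub⟩
    rcases eq_or_lt_of_le hu0 with h | h
    · rw [← h]
      simp only [Real.log_zero, neg_zero, zero_div]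
      positivity
    · have hlog : -Real.log u ≤ 2 * b ^ ((1:ℝ)/2) * u ^ (-(1/2):ℝ) + |Real.log b| := by
        have e1 : -Real.log u = -Real.log (u / b) + -Real.log b := by
          rw [Real.log_div h.ne' hb.ne']; ring
        have e2 : -Real.log (u / b) ≤ 2 * (u / b) ^ (-(1/2):ℝ) :=
          neg_log_le _ (by positivity)
        have e3 : (u / b) ^ (-(1/2):ℝ) = b ^ ((1:ℝ)/2) * u ^ (-(1/2):ℝ) := by
          rw [Real.div_rpow h.le hb.le, Real.rpow_neg h.le, Real.rpow_neg hb.le]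
          field_simp
        calc -Real.log u = -Real.log (u / b) + -Real.log b := e1
          _ ≤ 2 * ((u / b) ^ (-(1/2):ℝ)) + |Real.log b| := add_le_add e2 (neg_le_abs _)
          _ = 2 * b ^ ((1:ℝ)/2) * u ^ (-(1/2):ℝ) + |Real.log b| := by rw [e3]; ring
      have hden : b ^ m ≤ (b + u) ^ m := Real.rpow_le_rpow hb.le (by linarith) hm
      have hnum : 0 ≤ -Real.log u := by
        simpa using Real.log_nonpos h.le (by linarith)
      exact div_le_div₀ (le_trans hnum hlog) hlog hbm hden
  calc ∫ u in (0:ℝ)..b, (-Real.log u) / (b + u) ^ m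
      ≤ ∫ u in (0:ℝ)..b, (2 * b ^ ((1:ℝ)/2) * u ^ (-(1/2):ℝ) + |Real.log b|) / b ^ m :=
        intervalIntegral.integral_mono_on hb.le hint_f hint_g hmono
    _ = ((2 * b ^ ((1:ℝ)/2)) * (2 * b ^ ((1:ℝ)/2)) + |Real.log b| * b) / b ^ m := by
        rw [intervalIntegral.integral_div, intervalIntegral.integral_add
          (hint_r.const_mul _) intervalIntegrable_const,
          intervalIntegral.integral_const_mul, sqrt_int b hb.le]
        simp [smul_eq_mul]
        ring
    _ = b ^ (1 - m) * (4 + |Real.log b|) := by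
        have e4 : (2 * b ^ ((1:ℝ)/2)) * (2 * b ^ ((1:ℝ)/2)) = 4 * b := by
          have : b ^ ((1:ℝ)/2) * b ^ ((1:ℝ)/2) = b := by
            rw [← Real.rpow_add hb]; norm_num
          nlinarith [this]
        rw [e4, Real.rpow_sub hb, Real.rpow_one]
        field_simp

lemma gB_contOn (m b : ℝ) (hb : 0 < b) :
    ContinuousOn (fun u : ℝ => (-Real.log u) / u ^ m) (Set.Icc b 1) := by
  apply ContinuousOn.div
  · exact (Real.continuousOn_log.mono (fun x hx => ne_of_gt (lt_of_lt_of_le hb hx.1))).neg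
  · exact continuousOn_id.rpow_const (fun x hx => Or.inl (by simp only [id_eq]; exact ne_of_gt (lt_of_lt_of_le hb hx.1)))
  · intro x hx
    exact (Real.rpow_pos_of_pos (lt_of_lt_of_le hb hx.1) m).ne'

lemma mono_to_gB (m b : ℝ) (hm : 0 ≤ m) (hb : 0 < b) :
    ∀ u ∈ Set.Icc b (1:ℝ), (-Real.log u) / (b + u) ^ m ≤ (-Real.log u) / u ^ m := by
  intro u ⟨hu0, hu1⟩
  have hu : 0 < u := lt_of_lt_of_le hb hu0
  have hnum : 0 ≤ -Real.log u := by simpa using Real.log_nonpos hu.le hu1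
  have hden : u ^ m ≤ (b + u) ^ m := Real.rpow_le_rpow hu.le (by linarith) hm
  exact div_le_div_of_nonneg_left hnum (Real.rpow_pos_of_pos hu m) hden

lemma partB (m b : ℝ) (hm : 1 < m) (hb : 0 < b) (hb1 : b ≤ 1) :
    ∫ u in b..(1:ℝ), (-Real.log u) / (b + u) ^ m ≤
      1 / (m-1)^2 + b ^ (1-m) * |Real.log b| / (m-1) := by
  have hk : (0:ℝ) < m - 1 := by linarith
  have hint_f : IntervalIntegrable (fun u => (-Real.log u) / (b + u) ^ m) volume b 1 := by
    rw [intervalIntegrable_iff, Set.uIoc_of_le hb1]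
    exact (f_integrable m b (by linarith) hb).mono_set (Set.Ioc_subset_Ioc_left hb.le)
  have hint_g : IntervalIntegrable (fun u : ℝ => (-Real.log u) / u ^ m) volume b 1 := by
    apply ContinuousOn.intervalIntegrable
    rw [Set.uIcc_of_le hb1]
    exact gB_contOn m b hb
  have hderiv : ∀ x ∈ Set.uIcc b (1:ℝ), HasDerivAt
      (fun u : ℝ => u ^ (1-m) * (Real.log u / (m-1) + 1/(m-1)^2))
      ((-Real.log x) / x ^ m) x := by
    intro x hx
    ·
      rw [Set.uIcc_of_le hb1] at hx
      have hx0 : 0 < x := lt_of_lt_of_le hb hx.1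
      have h1 : HasDerivAt (fun u : ℝ => u ^ (1-m)) ((1-m) * x ^ (1-m-1)) x :=
        Real.hasDerivAt_rpow_const (Or.inl hx0.ne')
      have h2 : HasDerivAt (fun u : ℝ => Real.log u / (m-1) + 1/(m-1)^2)
          (x⁻¹ / (m-1)) x :=
        ((Real.hasDerivAt_log hx0.ne').div_const _).add_const _
      have h3 : HasDerivAt (fun u : ℝ => u ^ (1-m) * (Real.log u / (m-1) + 1/(m-1)^2))
          ((1 - m) * x ^ (1 - m - 1) * (Real.log x / (m - 1) + 1 / (m - 1) ^ 2) + x ^ (1 - m) * (x⁻¹ / (m - 1))) x := h1.mul h2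
      convert h3 using 1
      have e1 : x ^ (1-m-1) = (x ^ m)⁻¹ := by
        rw [show (1-m-1:ℝ) = -m by ring, Real.rpow_neg hx0.le]
      have e2 : x ^ (1-m) = x * (x ^ m)⁻¹ := by
        rw [show (1-m:ℝ) = 1 + -m by ring, Real.rpow_add hx0, Real.rpow_one,
          Real.rpow_neg hx0.le]
      rw [e1, e2]
      have hxm : (0:ℝ) < x ^ m := Real.rpow_pos_of_pos hx0 m
      field_simp
      ring
  have hftc := intervalIntegral.integral_eq_sub_of_hasDerivAt hderiv hint_g
  have hb1m : (0:ℝ) < b ^ (1-m) := Real.rpow_pos_of_pos hb _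
  calc ∫ u in b..(1:ℝ), (-Real.log u) / (b + u) ^ m
      ≤ ∫ u in b..(1:ℝ), (-Real.log u) / u ^ m :=
        intervalIntegral.integral_mono_on hb1 hint_f hint_g (mono_to_gB m b (by linarith) hb)
    _ = 1/(m-1)^2 - b ^ (1-m) * (Real.log b / (m-1) + 1/(m-1)^2) := by
        rw [hftc]; simp [Real.log_one, Real.one_rpow]
    _ ≤ 1 / (m-1)^2 + b ^ (1-m) * |Real.log b| / (m-1) := by
        have h5 : -Real.log b ≤ |Real.log b| := neg_le_abs _
        have h6 : 0 < (m-1)^2 := by positivity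
        have h7 : b ^ (1-m) * (-Real.log b) / (m-1) ≤ b ^ (1-m) * |Real.log b| / (m-1) := by
          gcongr
        have h8 : 0 ≤ b ^ (1-m) / (m-1)^2 := by positivity
        have expand : 1/(m-1)^2 - b ^ (1-m) * (Real.log b / (m-1) + 1/(m-1)^2)
            = 1/(m-1)^2 + b ^ (1-m) * (-Real.log b) / (m-1) - b ^ (1-m) / (m-1)^2 := by
          ring
        linarith

lemma partB1 (b : ℝ) (hb : 0 < b) (hb1 : b ≤ 1) :
    ∫ u in b..(1:ℝ), (-Real.log u) / (b + u) ≤ (Real.log b) ^ 2 / 2 := by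
  have hint_f : IntervalIntegrable (fun u => (-Real.log u) / (b + u)) volume b 1 := by
    apply ContinuousOn.intervalIntegrable
    rw [Set.uIcc_of_le hb1]
    apply ContinuousOn.div
    · exact (Real.continuousOn_log.mono (fun x hx => ne_of_gt (lt_of_lt_of_le hb hx.1))).neg
    · exact (continuous_const.add continuous_id).continuousOn
    · intro x hx; exact ne_of_gt (by linarith [hx.1, lt_of_lt_of_le hb hx.1])
  have hint_g : IntervalIntegrable (fun u : ℝ => (-Real.log u) / u) volume b 1 := by
    apply ContinuousOn.intervalIntegrable
    rw [Set.uIcc_of_le hb1]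
    apply ContinuousOn.div
    · exact (Real.continuousOn_log.mono (fun x hx => ne_of_gt (lt_of_lt_of_le hb hx.1))).neg
    · exact continuousOn_id
    · intro x hx; exact ne_of_gt (lt_of_lt_of_le hb hx.1)
  have hderiv : ∀ x ∈ Set.uIcc b (1:ℝ), HasDerivAt
      (fun u : ℝ => -(Real.log u) ^ 2 / 2) ((-Real.log x) / x) x := by
    intro x hx
    rw [Set.uIcc_of_le hb1] at hx
    have hx0 : 0 < x := lt_of_lt_of_le hb hx.1
    have h1 : HasDerivAt (fun u : ℝ => (Real.log u) ^ 2)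
        (2 * (Real.log x) ^ 1 * x⁻¹) x := (Real.hasDerivAt_log hx0.ne').pow 2
    have h2 : HasDerivAt (fun u : ℝ => -(Real.log u) ^ 2 / 2) (-(2 * (Real.log x) ^ 1 * x⁻¹) / 2) x :=
      (h1.neg).div_const 2
    convert h2 using 1
    field_simp
  have hftc := intervalIntegral.integral_eq_sub_of_hasDerivAt hderiv hint_g
  have hmono : ∀ u ∈ Set.Icc b (1:ℝ), (-Real.log u) / (b + u) ≤ (-Real.log u) / u := by
    intro u ⟨hu0, hu1⟩
    have hu : 0 < u := lt_of_lt_of_le hb hu0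
    have hnum : 0 ≤ -Real.log u := by simpa using Real.log_nonpos hu.le hu1
    exact div_le_div_of_nonneg_left hnum hu (by linarith)
  calc ∫ u in b..(1:ℝ), (-Real.log u) / (b + u)
      ≤ ∫ u in b..(1:ℝ), (-Real.log u) / u :=
        intervalIntegral.integral_mono_on hb1 hint_f hint_g hmono
    _ = (Real.log b) ^ 2 / 2 := by rw [hftc, Real.log_one]; ring

lemma whole (m b : ℝ) (hm : 0 ≤ m) (hb : 1 ≤ b) :
    ∫ u in (0:ℝ)..1, (-Real.log u) / (b + u) ^ m ≤ 4 := by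
  have hb0 : (0:ℝ) < b := by linarith
  have hint_f : IntervalIntegrable (fun u => (-Real.log u) / (b + u) ^ m) volume 0 1 := by
    rw [intervalIntegrable_iff, Set.uIoc_of_le zero_le_one]
    exact f_integrable m b hm hb0
  have hint_g : IntervalIntegrable (fun u : ℝ => 2 * u ^ (-(1/2):ℝ)) volume 0 1 :=
    (intervalIntegral.intervalIntegrable_rpow' (by norm_num)).const_mul _
  have hmono : ∀ u ∈ Set.Icc (0:ℝ) 1, (-Real.log u) / (b + u) ^ m ≤ 2 * u ^ (-(1/2):ℝ) := by
    intro u ⟨hu0, hu1⟩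
    rcases eq_or_lt_of_le hu0 with h | h
    · rw [← h]
      simp [Real.log_zero, Real.zero_rpow (by norm_num : (-(1/2):ℝ) ≠ 0)]
    · have hnum : 0 ≤ -Real.log u := by simpa using Real.log_nonpos h.le hu1
      have hden : 1 ≤ (b + u) ^ m := Real.one_le_rpow (by linarith) hm
      calc (-Real.log u) / (b + u) ^ m ≤ -Real.log u := div_le_self hnum hden
        _ ≤ 2 * u ^ (-(1/2):ℝ) := neg_log_le u h
  calc ∫ u in (0:ℝ)..1, (-Real.log u) / (b + u) ^ m
      ≤ ∫ u in (0:ℝ)..1, 2 * u ^ (-(1/2):ℝ) :=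
        intervalIntegral.integral_mono_on zero_le_one hint_f hint_g hmono
    _ = 4 := by
        rw [intervalIntegral.integral_const_mul, sqrt_int 1 zero_le_one]
        norm_num

lemma Bbound (m b : ℝ) (hm : 1 < m) (hb : 0 < b) :
    b ^ (1-m) ≤ Real.exp (m-1) + b ^ (1-m) * |Real.log b| := by
  rcases le_or_gt b (Real.exp (-1)) with h | h
  · have hL : 1 ≤ |Real.log b| := by
      have h1 : Real.log b ≤ -1 := by
        calc Real.log b ≤ Real.log (Real.exp (-1)) := Real.log_le_log hb h
          _ = -1 := Real.log_exp _
      rw [abs_of_nonpos (by linarith)]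
      linarith
    nlinarith [Real.rpow_pos_of_pos hb (1-m), (Real.exp_pos (m-1)).le]
  · have h1 : b ^ (1-m) ≤ (Real.exp (-1)) ^ ((1:ℝ)-m) :=
      Real.rpow_le_rpow_of_nonpos (Real.exp_pos _) h.le (by linarith)
    have h2 : (Real.exp (-1)) ^ ((1:ℝ)-m) = Real.exp (m-1) := by
      rw [Real.rpow_def_of_pos (Real.exp_pos _), Real.log_exp]
      ring_nf
    nlinarith [Real.rpow_pos_of_pos hb (1-m), abs_nonneg (Real.log b),
      mul_nonneg (Real.rpow_pos_of_pos hb (1-m)).le (abs_nonneg (Real.log b))]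

lemma ioo_eq (g : ℝ → ℝ) : ∫ u in Set.Ioo (0:ℝ) 1, g u = ∫ u in (0:ℝ)..1, g u := by
  rw [intervalIntegral.integral_of_le zero_le_one, integral_Ioc_eq_integral_Ioo]

theorem stmt3 (m : ℝ) (hm : 1 ≤ m) :
    ∃ C : ℝ, 0 < C ∧ ∀ b : ℝ, 0 < b → b < 10 →
      ∫ u in Set.Ioo (0:ℝ) 1, (-Real.log u) / (b + u) ^ m ≤
        C * (1 + b ^ (1 - m) * |Real.log b| +
          (if m = 1 then (Real.log b) ^ 2 else 0)) := by
  rcases eq_or_lt_of_le hm with h1 | h1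
  · -- m = 1
    subst h1
    refine ⟨4, by norm_num, ?_⟩
    intro b hb hb10
    rw [if_pos rfl, ioo_eq]
    have hB : b ^ ((1:ℝ) - 1) = 1 := by norm_num
    rw [hB]
    have hL : 0 ≤ |Real.log b| := abs_nonneg _
    have hL2 : 0 ≤ (Real.log b) ^ 2 := sq_nonneg _
    rcases le_or_gt b 1 with hb1 | hb1
    · have hsplit := intervalIntegral.integral_add_adjacent_intervals
        (f := fun u => (-Real.log u) / (b + u) ^ (1:ℝ))
        (by rw [intervalIntegrable_iff, Set.uIoc_of_le hb.le]
            exact (f_integrable 1 b zero_le_one hb).mono_set (Set.Ioc_subset_Ioc_right hb1))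
        (by rw [intervalIntegrable_iff, Set.uIoc_of_le hb1]
            exact (f_integrable 1 b zero_le_one hb).mono_set (Set.Ioc_subset_Ioc_left hb.le))
      have hA := partA 1 b zero_le_one hb hb1
      have hB2 : ∫ u in b..(1:ℝ), (-Real.log u) / (b + u) ^ (1:ℝ) ≤ (Real.log b) ^ 2 / 2 := by
        have := partB1 b hb hb1
        simpa [Real.rpow_one] using this
      rw [← hsplit]
      have hsq : |Real.log b| ^ 2 = (Real.log b) ^ 2 := sq_abs _
      have hA' : ∫ u in (0:ℝ)..b, (-Real.log u) / (b + u) ^ (1:ℝ) ≤ 4 + |Real.log b| := by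
        have e : b ^ ((1:ℝ) - 1) = 1 := by norm_num
        rw [e, one_mul] at hA
        linarith
      have hsum := add_le_add hA' hB2
      refine hsum.trans ?_
      nlinarith
    · have := whole 1 b zero_le_one hb1.le
      nlinarith
  · -- m > 1
    set k := m - 1 with hk
    have hk0 : 0 < k := by linarith
    refine ⟨4 * Real.exp k + 5 + 1/k^2 + 1/k, by positivity, ?_⟩
    intro b hb hb10
    rw [if_neg (by linarith), ioo_eq, add_zero]
    have hBpos : 0 < b ^ (1 - m) := Real.rpow_pos_of_pos hb _
    have hL : 0 ≤ |Real.log b| := abs_nonneg _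
    have hBL : 0 ≤ b ^ (1 - m) * |Real.log b| := by positivity
    have hexp : 1 ≤ Real.exp k := Real.one_le_exp hk0.le
    rcases le_or_gt b 1 with hb1 | hb1
    · have hsplit := intervalIntegral.integral_add_adjacent_intervals
        (f := fun u => (-Real.log u) / (b + u) ^ m)
        (by rw [intervalIntegrable_iff, Set.uIoc_of_le hb.le]
            exact (f_integrable m b (by linarith) hb).mono_set (Set.Ioc_subset_Ioc_right hb1))
        (by rw [intervalIntegrable_iff, Set.uIoc_of_le hb1]
            exact (f_integrable m b (by linarith) hb).mono_set (Set.Ioc_subset_Ioc_left hb.le))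
      have hA := partA m b (by linarith) hb hb1
      have hB2 := partB m b h1 hb hb1
      have habs := Bbound m b h1 hb
      rw [← hsplit]
      have h1k : 0 < 1/k := by positivity
      have h1k2 : 0 < 1/k^2 := by positivity
      have e1 : b ^ (1-m) * |Real.log b| / (m-1) = (1/k) * (b ^ (1-m) * |Real.log b|) := by
        rw [hk]; ring
      rw [e1] at hB2
      nlinarith [mul_nonneg (le_trans zero_le_one hexp) hBL, mul_nonneg h1k.le hBL, mul_nonneg h1k2.le hBL]
    · have hw := whole m b (by linarith) hb1.le
      have h1k : 0 < 1/k := by positivity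
      have h1k2 : 0 < 1/k^2 := by positivity
      nlinarith [mul_nonneg (mul_nonneg (by norm_num : (0:ℝ) ≤ 4) (le_trans zero_le_one hexp)) hBL,
        mul_nonneg h1k.le hBL, mul_nonneg h1k2.le hBL]
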